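/- Let n, m be natural numbers, let a, b, c, d, e, f ∈ ℤⁿ be column vectors, and let P be an n × m integer matrix. Let M be the (n+3) × (m+7) integer matrix whose first n rows form the block (a | b | c | d | e | f | 0 | P) (where 0 is a zero column) and whose last three rows are (1,1,0,1,0,0,1,0,…,0), (0,1,1,0,1,0,1,0,…,0), and (0,0,0,1,1,1,1,0,…,0) (zeros under the columns of P). Let M' be the (n+3) × (m+7) integer matrix with the same first n rows (a | b | c | d | e | f | 0 | P) and whose last three rows are (0,0,1,0,1,1,1,0,…,0), (1,0,0,1,0,1,1,0,…,0), and (1,1,1,0,0,0,1,0,…,0). Then M is ℤ-equivalent to M'. -/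

import Mathlib

private lemma vec7_val_five {α : Type*} (a b c d e f g : α) :
    (![a,b,c,d,e,f,g] : Fin 7 → α) 5 = f := rfl

private lemma vec7_val_six {α : Type*} (a b c d e f g : α) :
    (![a,b,c,d,e,f,g] : Fin 7 → α) 6 = g := rfl

private def Vmat : Matrix (Fin 7) (Fin 7) ℤ :=
  !![1,0,0,0,0,0,0; 0,1,0,0,0,0,0; 0,0,1,0,0,0,0; 0,0,0,1,0,0,0;
     0,0,0,0,1,0,0; 0,0,0,0,0,1,0; 1,1,1,-1,-1,-1,1]

private def Umat : Matrix (Fin 3) (Fin 3) ℤ := !![-1,0,2; 0,-1,2; 0,0,1]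

private lemma Vmat_det : Vmat.det = 1 := by
  rw [Matrix.det_of_lowerTriangular _
    (by unfold Matrix.BlockTriangular Vmat; intro i j h; rw [OrderDual.toDual_lt_toDual] at h; fin_cases i <;> fin_cases j <;> simp_all (config := {decide := true}) :
      Matrix.BlockTriangular Vmat OrderDual.toDual)]
  decide

private lemma Umat_det : Umat.det = 1 := by decide

private lemma UBV_eq :
    Umat * (!![1,1,0,1,0,0,1; 0,1,1,0,1,0,1; 0,0,0,1,1,1,1] : Matrix (Fin 3) (Fin 7) ℤ) * Vmat
    = !![0,0,1,0,1,1,1; 1,0,0,1,0,1,1; 1,1,1,0,0,0,1] := by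
  decide

private lemma AV_eq (n : ℕ) (a b c d e f : Fin n → ℤ) :
    (Matrix.of fun i => ![a i, b i, c i, d i, e i, f i, 0] : Matrix (Fin n) (Fin 7) ℤ) * Vmat
    = Matrix.of fun i => ![a i, b i, c i, d i, e i, f i, 0] := by
  ext i j
  rw [Matrix.mul_apply, Fin.sum_univ_succ, Fin.sum_univ_succ, Fin.sum_univ_succ,
    Fin.sum_univ_succ, Fin.sum_univ_succ, Fin.sum_univ_succ, Fin.sum_univ_succ,
    Fin.sum_univ_zero]
  fin_cases j <;>
    simp [Vmat, Matrix.cons_val_succ, vec7_val_five, vec7_val_six]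

theorem reidemeister_III_matrix (n m : ℕ) (a b c d e f : Fin n → ℤ)
    (P : Matrix (Fin n) (Fin m) ℤ) :
    -- `M` : first `n` rows are `(a | b | c | d | e | f | 0 | P)`, last three rows are
    -- `(1,1,0,1,0,0,1,0,…,0)`, `(0,1,1,0,1,0,1,0,…,0)`, `(0,0,0,1,1,1,1,0,…,0)`
    ∀ M : Matrix (Fin n ⊕ Fin 3) (Fin 7 ⊕ Fin m) ℤ,
      M = Matrix.fromBlocks
        (Matrix.of fun i => ![a i, b i, c i, d i, e i, f i, 0]) P
        (!![1,1,0,1,0,0,1; 0,1,1,0,1,0,1; 0,0,0,1,1,1,1] : Matrix (Fin 3) (Fin 7) ℤ) 0 →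
    -- `M'` : same first `n` rows, last three rows are
    -- `(0,0,1,0,1,1,1,0,…,0)`, `(1,0,0,1,0,1,1,0,…,0)`, `(1,1,1,0,0,0,1,0,…,0)`
    ∀ M' : Matrix (Fin n ⊕ Fin 3) (Fin 7 ⊕ Fin m) ℤ,
      M' = Matrix.fromBlocks
        (Matrix.of fun i => ![a i, b i, c i, d i, e i, f i, 0]) P
        (!![0,0,1,0,1,1,1; 1,0,0,1,0,1,1; 1,1,1,0,0,0,1] : Matrix (Fin 3) (Fin 7) ℤ) 0 →
    -- `M` is ℤ-equivalent to `M'`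
    ∃ (P' : Matrix (Fin n ⊕ Fin 3) (Fin n ⊕ Fin 3) ℤ)
      (Q' : Matrix (Fin 7 ⊕ Fin m) (Fin 7 ⊕ Fin m) ℤ),
      IsUnit P'.det ∧ IsUnit Q'.det ∧ P' * M * Q' = M' := by
  intro M hM M' hM'
  subst hM hM'
  refine ⟨Matrix.fromBlocks 1 0 0 Umat, Matrix.fromBlocks Vmat 0 0 1, ?_, ?_, ?_⟩
  · rw [Matrix.det_fromBlocks_zero₂₁, Matrix.det_one, one_mul, Umat_det]
    exact isUnit_one
  · rw [Matrix.det_fromBlocks_zero₂₁, Matrix.det_one, mul_one, Vmat_det]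
    exact isUnit_one
  · rw [Matrix.fromBlocks_multiply, Matrix.fromBlocks_multiply]
    simp only [Matrix.one_mul, Matrix.zero_mul, Matrix.mul_zero, Matrix.mul_one,
      zero_add, add_zero, Matrix.mul_assoc]
    rw [AV_eq, ← Matrix.mul_assoc, UBV_eq]
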